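/- Let A be a simple graph and let id : V(A) → V(A) be the identity function. If the Sierpiński product A ⊗_id A is 2-connected, then A is 2-connected. -/

import Mathlib

/-- The Sierpiński product of simple graphs `A` and `B` with respect to `f : V(A) → V(B)`:
vertices are pairs `(a, b)`; two vertices are adjacent iff they lie in the same fibre and
their second coordinates are adjacent in `B`, or their first coordinates are adjacent in `A`
and the second coordinates are given by `f` applied to the other first coordinate. -/
def SierpinskiProd {α β : Type*} (A : SimpleGraph α) (B : SimpleGraph β)
    (f : α → β) : SimpleGraph (α × β) where
  Adj p q := (p.1 = q.1 ∧ B.Adj p.2 q.2) ∨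
    (A.Adj p.1 q.1 ∧ p.2 = f q.1 ∧ q.2 = f p.1)
  symm := by
    refine ⟨?_⟩
    rintro ⟨a₁, b₁⟩ ⟨a₂, b₂⟩ (⟨h, hB⟩ | ⟨hA, h₁, h₂⟩)
    · exact Or.inl ⟨h.symm, hB.symm⟩
    · exact Or.inr ⟨hA.symm, h₂, h₁⟩
  loopless := by
    refine ⟨?_⟩
    rintro ⟨a, b⟩ (⟨_, hB⟩ | ⟨hA, _, _⟩)
    · exact B.ne_of_adj hB rfl
    · exact A.ne_of_adj hA rfl

/-- A vertex `v` of a graph `G` is a separating vertex if deleting `v` (taking the induced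
subgraph on the remaining vertices) yields a graph that is not connected. -/
def IsSeparatingVertex {V : Type*} (G : SimpleGraph V) (v : V) : Prop :=
  ¬ (G.induce ({v}ᶜ : Set V)).Connected

/-- A graph `G` is `k`-connected if it has more than `k` vertices and deleting any set of
fewer than `k` vertices leaves a connected graph. -/
def KConnected {V : Type*} [Fintype V] (k : ℕ) (G : SimpleGraph V) : Prop :=
  k < Fintype.card V ∧ ∀ S : Set V, S.ncard < k → (G.induce Sᶜ).Connected

/-- `W` is a cut-set of `G` if deleting all vertices of `W` strictly increases the number of
connected components. -/
def IsCutSet {V : Type*} (G : SimpleGraph V) (W : Set V) : Prop :=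
  Nat.card G.ConnectedComponent < Nat.card (G.induce Wᶜ).ConnectedComponent

/-- `W` is a minimal cut-set of `G` if it is a cut-set and no proper subset is a cut-set. -/
def IsMinCutSet {V : Type*} (G : SimpleGraph V) (W : Set V) : Prop :=
  IsCutSet G W ∧ ∀ W' ⊂ W, ¬ IsCutSet G W'

open SimpleGraph

/-- hom from induced subgraph to ambient graph -/
def valHom {V : Type*} (G : SimpleGraph V) (s : Set V) : (G.induce s) →g G :=
  ⟨Subtype.val, fun h => h⟩

lemma proj_reachable {α : Type*} (A : SimpleGraph α) {p q : α × α}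
    (h : (SierpinskiProd A A id).Reachable p q) : A.Reachable p.1 q.1 := by
  obtain ⟨w⟩ := h
  induction w with
  | nil => exact Reachable.refl _
  | cons hadj w ih =>
    rcases hadj with ⟨h1, _⟩ | ⟨h1, _, _⟩
    · rw [h1]; exact ih
    · exact (h1.reachable).trans ih

lemma exists_adj_of_reachable {α : Type*} {A : SimpleGraph α} {a b : α}
    (h : A.Reachable a b) : a ≠ b → ∃ c d, A.Adj c d := by
  obtain ⟨p⟩ := h
  induction p with
  | nil => exact fun hne => absurd rfl hne
  | cons h' _ _ => exact fun _ => ⟨_, _, h'⟩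

lemma exists_adj_head {V : Type*} {G : SimpleGraph V} {s t : V}
    (h : G.Reachable s t) (hne : s ≠ t) : ∃ r, G.Adj s r := by
  obtain ⟨p⟩ := h
  cases p with
  | nil => exact absurd rfl hne
  | cons h' _ => exact ⟨_, h'⟩

lemma key {α : Type*} (A : SimpleGraph α) (v : α)
    (hconn : ((SierpinskiProd A A id).induce ({((v, v) : α × α)}ᶜ : Set (α × α))).Connected)
    (hne : ∃ x : α, x ≠ v) : (A.induce ({v}ᶜ : Set α)).Connected := by
  have hne' : Nonempty ({v}ᶜ : Set α) := by
    obtain ⟨x, hx⟩ := hne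
    exact ⟨⟨x, by simpa using hx⟩⟩
  haveI := hne'
  refine ⟨fun x y => ?_⟩
  obtain ⟨x, hx⟩ := x
  obtain ⟨y, hy⟩ := y
  set G := A.induce ({v}ᶜ : Set α) with hG
  let Reach : α → Prop := fun a => ∃ ha : a ∈ ({v}ᶜ : Set α), G.Reachable ⟨x, hx⟩ ⟨a, ha⟩
  let X : Set (α × α) := {p | (p.1 ≠ v ∧ Reach p.1) ∨ (p.1 = v ∧ Reach p.2)}
  have step : ∀ {a b : α}, Reach a → b ≠ v → A.Adj a b → Reach b := by
    rintro a b ⟨ha, hr⟩ hb hadj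
    refine ⟨by simpa using hb, hr.trans (SimpleGraph.Adj.reachable ?_)⟩
    exact hadj
  have inv : ∀ p q : α × α, q ≠ (v, v) → (SierpinskiProd A A id).Adj p q → p ∈ X → q ∈ X := by
    rintro ⟨a, b⟩ ⟨c, d⟩ hq hadj hp
    rcases hp with ⟨ha, hr⟩ | ⟨ha, hr⟩
    · have ha' : a ≠ v := ha
      have hr' : Reach a := hr
      rcases hadj with ⟨h1, hB⟩ | ⟨hA, h1, h2⟩
      · have h1' : a = c := h1
        exact Or.inl ⟨h1' ▸ ha', h1' ▸ hr'⟩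
      · have hA' : A.Adj a c := hA
        have h2' : d = a := h2
        by_cases hc : c = v
        · exact Or.inr ⟨hc, h2' ▸ hr'⟩
        · exact Or.inl ⟨hc, step hr' hc hA'⟩
    · have ha' : a = v := ha
      have hr' : Reach b := hr
      obtain ⟨hbmem, -⟩ := id hr'
      have hbv : b ≠ v := hbmem
      rcases hadj with ⟨h1, hB⟩ | ⟨hA, h1, h2⟩
      · have h1' : a = c := h1
        have hB' : A.Adj b d := hB
        by_cases hd : d = v
        · exact absurd (by rw [← h1', ha', hd]) hq
        · exact Or.inr ⟨h1' ▸ ha', step hr' hd hB'⟩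
      · have h1' : b = c := h1
        exact Or.inl ⟨h1' ▸ hbv, h1' ▸ hr'⟩
  have main : ∀ (a b : ({((v, v) : α × α)}ᶜ : Set (α × α)))
      (_ : ((SierpinskiProd A A id).induce ({((v, v) : α × α)}ᶜ : Set (α × α))).Walk a b),
      (a : α × α) ∈ X → (b : α × α) ∈ X := by
    intro a b w
    induction w with
    | nil => exact id
    | cons hadj w ih =>
      intro hu
      rename_i u r _
      exact ih (inv u r r.2 hadj hu)
  have hxv : x ≠ v := by simpa using hx
  have hyv : y ≠ v := by simpa using hy
  have hx2 : ((x, x) : α × α) ∈ ({((v, v) : α × α)}ᶜ : Set (α × α)) := by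
    simp [Prod.ext_iff, hxv]
  have hy2 : ((y, y) : α × α) ∈ ({((v, v) : α × α)}ᶜ : Set (α × α)) := by
    simp [Prod.ext_iff, hyv]
  obtain ⟨w⟩ := hconn.preconnected ⟨(x, x), hx2⟩ ⟨(y, y), hy2⟩
  have hyy := main _ _ w (Or.inl ⟨hxv, hx, Reachable.refl _⟩)
  rcases hyy with ⟨-, hR⟩ | ⟨hyv', -⟩
  · have hR' : ∃ ha : y ∈ ({v}ᶜ : Set α), G.Reachable ⟨x, hx⟩ ⟨y, ha⟩ := hR
    obtain ⟨hmm, hr⟩ := hR'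
    exact hr
  · exact absurd hyv' hyv


/-- **Lemma.** If `A ⊗_id A` is `2`-connected then `A` is `2`-connected. -/
theorem sierpinski_self_two_connected {α : Type*} [Fintype α] (A : SimpleGraph α)
    (h : KConnected 2 (SierpinskiProd A A id)) : KConnected 2 A := by
  obtain ⟨hcard, hdel⟩ := h
  rw [Fintype.card_prod] at hcard
  have h2 : 1 < Fintype.card α := by
    by_contra hle
    push_neg at hle
    have := Nat.mul_le_mul hle hle
    omega
  have hPreach : ∀ p q : α × α, (SierpinskiProd A A id).Reachable p q := by
    intro p q
    have hc := hdel ∅ (by simp)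
    rw [Set.compl_empty] at hc
    have := hc.preconnected ⟨p, trivial⟩ ⟨q, trivial⟩
    exact this.map (valHom _ _)
  have hAreach : ∀ a b : α, A.Reachable a b := fun a b =>
    proj_reachable A (hPreach (a, a) (b, b))
  have h3 : 2 < Fintype.card α := by
    rcases lt_or_ge 2 (Fintype.card α) with h' | h'
    · exact h'
    have hc2 : Nat.card α = 2 := by
      rw [Nat.card_eq_fintype_card]; omega
    rw [Nat.card_eq_two_iff] at hc2
    obtain ⟨u, w, huw, huniv⟩ := hc2
    have hall : ∀ z : α, z = u ∨ z = w := by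
      intro z
      have : z ∈ ({u, w} : Set α) := huniv ▸ Set.mem_univ z
      simpa using this
    have hadj : A.Adj u w := by
      obtain ⟨c, d, hcd⟩ := exists_adj_of_reachable (hAreach u w) huw
      rcases hall c with rfl | rfl <;> rcases hall d with rfl | rfl
      · exact absurd hcd (A.loopless.irrefl _)
      · exact hcd
      · exact hcd.symm
      · exact absurd hcd (A.loopless.irrefl _)
    exfalso
    have hC := hdel {((u, w) : α × α)} (by simp)
    have huu : ((u, u) : α × α) ∈ ({((u, w) : α × α)}ᶜ : Set (α × α)) := by
      simp only [Set.mem_compl_iff, Set.mem_singleton_iff]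
      exact fun e => huw (congrArg Prod.snd e)
    have hww : ((w, w) : α × α) ∈ ({((u, w) : α × α)}ᶜ : Set (α × α)) := by
      simp only [Set.mem_compl_iff, Set.mem_singleton_iff]
      exact fun e => huw (congrArg Prod.fst e).symm
    have hne : (⟨(u, u), huu⟩ : ({((u, w) : α × α)}ᶜ : Set (α × α))) ≠ ⟨(w, w), hww⟩ := by
      intro e
      exact huw (congrArg (fun z : ({((u, w) : α × α)}ᶜ : Set (α × α)) => (z : α × α).1) e)
    obtain ⟨⟨⟨c, d⟩, hmem⟩, hr⟩ :=
      exists_adj_head (hC.preconnected ⟨(u, u), huu⟩ ⟨(w, w), hww⟩) hne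
    have hr2 : ((c, d) : α × α) ≠ (u, w) := by simpa using hmem
    have hr' : (SierpinskiProd A A id).Adj (u, u) (c, d) := hr
    rcases hr' with ⟨h1, hB⟩ | ⟨hA, h1, h2⟩
    · rcases hall d with rfl | rfl
      · exact absurd hB (A.loopless.irrefl _)
      · have h1' : u = c := h1
        exact hr2 (by rw [← h1'])
    · simp only [id_eq] at h1 h2
      exact absurd (h1 ▸ hA) (A.loopless.irrefl _)
  refine ⟨h3, ?_⟩
  intro S hS
  have : S.ncard = 0 ∨ S.ncard = 1 := by omega
  rcases this with h0 | h1
  · rw [Set.ncard_eq_zero S.toFinite] at h0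
    subst h0
    rw [Set.compl_empty]
    have : Nonempty α := Fintype.card_pos_iff.mp (by omega)
    haveI : Nonempty (Set.univ : Set α) := ⟨⟨Classical.arbitrary α, trivial⟩⟩
    refine ⟨fun a b => ?_⟩
    obtain ⟨a, ha⟩ := a
    obtain ⟨b, hb⟩ := b
    exact (hAreach a b).map (induceUnivIso A).symm.toHom
  · rw [Set.ncard_eq_one] at h1
    obtain ⟨v, rfl⟩ := h1
    exact key A v (hdel {((v, v) : α × α)} (by simp)) (Fintype.exists_ne_of_one_lt_card h2 v)
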